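/- Let (f,M) be a polymatroid, c ∈ M with |M∖{c}| ≥ 2, let u,t ≥ 0, let x ∉ M, and define the excess function e_x by e_x(A) = u+t if A = ∅ or A = {c}, and e_x(A) = u for all other A ⊆ M. If t ≤ f(a,b) and t ≤ f(a,b|c) for all distinct a,b ∈ M∖{c}, then the extension f_x (given by f_x(A) = f(A) and f_x(A∪{x}) = f(A)+e_x(A) for A ⊆ M) is a polymatroid on M∪{x}. -/

import Mathlib

open Finset

noncomputable section

variable {α : Type*} [DecidableEq α]

/-- `f` is a polymatroid with ground set `M`: it vanishes on `∅` and is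
non-negative, monotone and submodular on subsets of `M`. -/
def IsPolymatroid (M : Finset α) (f : Finset α → ℝ) : Prop :=
  f ∅ = 0 ∧
  (∀ A, A ⊆ M → 0 ≤ f A) ∧
  (∀ A B, A ⊆ B → B ⊆ M → f A ≤ f B) ∧
  (∀ A B, A ⊆ M → B ⊆ M → f (A ∪ B) + f (A ∩ B) ≤ f A + f B)

/-- `pmi f I J K` is the expression `f(I,J|K) = f(I∪K)+f(J∪K)−f(I∪J∪K)−f(K)`. -/
def pmi (f : Finset α → ℝ) (I J K : Finset α) : ℝ :=
  f (I ∪ K) + f (J ∪ K) - f (I ∪ J ∪ K) - f K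

/-- `pcd f I K` is the expression `f(I|K) = f(I∪K) − f(K)`. -/
def pcd (f : Finset α → ℝ) (I K : Finset α) : ℝ := f (I ∪ K) - f K

/-- if `t ≤ f(a,b)` and `t ≤ f(a,b|c)` for all distinct
`a,b ∈ M∖{c}`, then the extension with excess `e_x(A) = u+t` for `A = ∅` or
`A = {c}` and `e_x(A) = u` otherwise is a polymatroid. -/
theorem statement_6 (M : Finset α) (f : Finset α → ℝ) (hf : IsPolymatroid M f)
    (c : α) (hc : c ∈ M) (hM : 2 ≤ (M \ {c}).card)
    (u t : ℝ) (hu : 0 ≤ u) (ht : 0 ≤ t)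
    (x : α) (hx : x ∉ M)
    (htf : ∀ a ∈ M \ {c}, ∀ b ∈ M \ {c}, a ≠ b →
      t ≤ pmi f {a} {b} ∅ ∧ t ≤ pmi f {a} {b} {c})
    (fx : Finset α → ℝ)
    (hfx1 : ∀ A ⊆ M, fx A = f A)
    (hfx2 : ∀ A ⊆ M, fx (A ∪ {x}) = f A + (if A = ∅ ∨ A = {c} then u + t else u)) :
    IsPolymatroid (M ∪ {x}) fx := by
  obtain ⟨hf0, hfnn, hfmono, hfsub⟩ := hf
  -- rewrite the excess condition via `⊆ {c}`
  have hfx2' : ∀ A ⊆ M, fx (A ∪ {x}) = f A + (if A ⊆ {c} then u + t else u) := by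
    intro A hA
    rw [hfx2 A hA]
    congr 1
    have h : (A = ∅ ∨ A = {c}) ↔ A ⊆ {c} := subset_singleton_iff.symm
    exact if_congr h rfl rfl
  -- diminishing returns
  have diffm : ∀ X Y Z : Finset α, X ⊆ Y → Y ⊆ M → Z ⊆ M →
      f (Y ∪ Z) + f X ≤ f Y + f (X ∪ Z) := by
    intro X Y Z hXY hY hZ
    have h1 := hfsub Y (X ∪ Z) hY (union_subset (hXY.trans hY) hZ)
    have e1 : Y ∪ (X ∪ Z) = Y ∪ Z := by
      rw [← union_assoc, union_eq_left.mpr hXY]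
    have h2 : f X ≤ f (Y ∩ (X ∪ Z)) :=
      hfmono _ _ (subset_inter hXY subset_union_left) (inter_subset_left.trans hY)
    rw [e1] at h1; linarith
  -- key inequality: mutual information bound for big sets
  have key : ∀ K A B : Finset α, (K = ∅ ∨ K = {c}) → K ⊆ A → K ⊆ B →
      A ⊆ M → B ⊆ M → ∀ a ∈ A, ∀ b ∈ B, a ≠ c → b ≠ c → a ≠ b →
      t ≤ f A + f B - f (A ∪ B) - f K := by
    intro K A B hK hKA hKB hA hB a ha b hb hac hbc hab
    have haM : a ∈ M \ {c} := mem_sdiff.mpr ⟨hA ha, by simp [hac]⟩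
    have hbM : b ∈ M \ {c} := mem_sdiff.mpr ⟨hB hb, by simp [hbc]⟩
    have hKM : K ⊆ M := hKA.trans hA
    have hbase : t ≤ f ({a} ∪ K) + f ({b} ∪ K) - f ({a, b} ∪ K) - f K := by
      rcases hK with rfl | rfl
      · have h := (htf a haM b hbM hab).1
        simp only [pmi, union_empty] at h
        have e : ({a} : Finset α) ∪ {b} = {a, b} := by
          ext y; simp [or_comm]
        rw [e] at h
        simpa [hf0] using h
      · have h := (htf a haM b hbM hab).2
        simp only [pmi] at h
        have e : ({a} : Finset α) ∪ {b} ∪ {c} = {a, b} ∪ {c} := by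
          ext y; simp only [mem_union, mem_insert, mem_singleton]
        rw [e] at h
        exact h
    have step1 := diffm ({a} ∪ K) A ({b} ∪ K)
      (union_subset (singleton_subset_iff.mpr ha) hKA) hA
      (union_subset (singleton_subset_iff.mpr (hB hb)) hKM)
    have e2 : {a} ∪ K ∪ ({b} ∪ K) = {a, b} ∪ K := by
      ext y; simp only [mem_union, mem_inter, mem_insert, mem_singleton]; tauto
    have step2 := diffm ({b} ∪ K) B A
      (union_subset (singleton_subset_iff.mpr hb) hKB) hB hA
    have e3 : B ∪ A = A ∪ B := union_comm _ _
    have e4 : {b} ∪ K ∪ A = A ∪ ({b} ∪ K) := union_comm _ _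
    rw [e2] at step1
    rw [e3, e4] at step2
    linarith
  -- decomposition of subsets of M ∪ {x}
  have hnotx : ∀ A : Finset α, A ⊆ M ∪ {x} → x ∉ A → A ⊆ M := by
    intro A hA hxA y hy
    rcases mem_union.mp (hA hy) with h | h
    · exact h
    · exact absurd (mem_singleton.mp h ▸ hy) hxA
  have hsub : ∀ A : Finset α, A ⊆ M ∪ {x} → x ∈ A →
      A.erase x ⊆ M ∧ A = A.erase x ∪ {x} := by
    intro A hA hxA
    constructor
    · intro y hy
      rcases mem_union.mp (hA (mem_of_mem_erase hy)) with h | h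
      · exact h
      · exact absurd (mem_singleton.mp h) (ne_of_mem_erase hy)
    · rw [union_comm, ← insert_eq, insert_erase hxA]
  refine ⟨?_, ?_, ?_, ?_⟩
  · rw [hfx1 ∅ (empty_subset M), hf0]
  · -- nonnegativity
    intro A hA
    by_cases hxA : x ∈ A
    · obtain ⟨h1, h2⟩ := hsub A hA hxA
      rw [h2, hfx2' _ h1]
      have := hfnn _ h1
      split_ifs <;> linarith
    · have hAM := hnotx A hA hxA
      rw [hfx1 A hAM]; exact hfnn A hAM
  · -- monotonicity
    intro A B hAB hBM
    by_cases hxB : x ∈ B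
    · obtain ⟨hB1, hB2⟩ := hsub B hBM hxB
      by_cases hxA : x ∈ A
      · obtain ⟨hA1, hA2⟩ := hsub A (hAB.trans hBM) hxA
        have hAB' : A.erase x ⊆ B.erase x := erase_subset_erase x hAB
        rw [hA2, hB2, hfx2' _ hA1, hfx2' _ hB1]
        have hm := hfmono _ _ hAB' hB1
        by_cases h1 : A.erase x ⊆ {c} <;> by_cases h2 : B.erase x ⊆ {c}
        · rw [if_pos h1, if_pos h2]; linarith
        · -- hard case: excess drops by t
          rw [if_pos h1, if_neg h2]
          obtain ⟨a, haB, hac⟩ := not_subset.mp h2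
          have hac' : a ≠ c := by simpa using hac
          obtain ⟨b, hbM', hba⟩ := exists_mem_ne (lt_of_lt_of_le one_lt_two hM) a
          have hbc : b ≠ c := by simpa using (mem_sdiff.mp hbM').2
          have hbMm : b ∈ M := (mem_sdiff.mp hbM').1
          have hK : A.erase x = ∅ ∨ A.erase x = {c} := subset_singleton_iff.mp h1
          have hkey := key (A.erase x) (B.erase x) ({b} ∪ A.erase x) hK hAB'
            subset_union_right hB1
            (union_subset (singleton_subset_iff.mpr hbMm) (hAB'.trans hB1))
            a haB b (mem_union_left _ (mem_singleton_self b)) hac' hbc hba.symm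
          have hm2 : f ({b} ∪ A.erase x) ≤ f (B.erase x ∪ ({b} ∪ A.erase x)) :=
            hfmono _ _ subset_union_right
              (union_subset hB1 (union_subset (singleton_subset_iff.mpr hbMm)
                (hAB'.trans hB1)))
          linarith
        · exact absurd (hAB'.trans h2) h1
        · rw [if_neg h1, if_neg h2]; linarith
      · have hAM := hnotx A (hAB.trans hBM) hxA
        have hAB' : A ⊆ B.erase x := by
          intro y hy
          exact mem_erase.mpr ⟨fun h => hxA (h ▸ hy), hAB hy⟩
        rw [hB2, hfx1 A hAM, hfx2' _ hB1]
        have := hfmono _ _ hAB' hB1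
        split_ifs <;> linarith
    · have hxA : x ∉ A := fun h => hxB (hAB h)
      have hAM := hnotx A (hAB.trans hBM) hxA
      have hBM' := hnotx B hBM hxB
      rw [hfx1 A hAM, hfx1 B hBM']
      exact hfmono A B hAB hBM'
  · -- submodularity
    intro A B hA hB
    by_cases hxA : x ∈ A <;> by_cases hxB : x ∈ B
    · -- both contain x
      obtain ⟨hA1, hA2⟩ := hsub A hA hxA
      obtain ⟨hB1, hB2⟩ := hsub B hB hxB
      set A' := A.erase x
      set B' := B.erase x
      have eU : A ∪ B = (A' ∪ B') ∪ {x} := by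
        rw [hA2, hB2]; ext y; simp only [mem_union, mem_inter, mem_insert, mem_singleton]; tauto
      have eI : A ∩ B = (A' ∩ B') ∪ {x} := by
        rw [hA2, hB2]; ext y; simp only [mem_union, mem_inter, mem_insert, mem_singleton]; tauto
      rw [eU, eI, hA2, hB2, hfx2' _ hA1, hfx2' _ hB1,
        hfx2' _ (union_subset hA1 hB1), hfx2' _ (inter_subset_left.trans hA1)]
      have hfs := hfsub A' B' hA1 hB1
      by_cases h1 : A' ⊆ {c} <;> by_cases h2 : B' ⊆ {c}
      · have hu1 : A' ∪ B' ⊆ {c} := union_subset h1 h2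
        have hi1 : A' ∩ B' ⊆ {c} := inter_subset_left.trans h1
        rw [if_pos hu1, if_pos hi1, if_pos h1, if_pos h2]; linarith
      · have hnu : ¬ A' ∪ B' ⊆ {c} := fun h => h2 (subset_union_right.trans h)
        have hi1 : A' ∩ B' ⊆ {c} := inter_subset_left.trans h1
        rw [if_neg hnu, if_pos hi1, if_pos h1, if_neg h2]; linarith
      · have hnu : ¬ A' ∪ B' ⊆ {c} := fun h => h1 (subset_union_left.trans h)
        have hi1 : A' ∩ B' ⊆ {c} := inter_subset_right.trans h2
        rw [if_neg hnu, if_pos hi1, if_neg h1, if_pos h2]; linarith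
      · have hnu : ¬ A' ∪ B' ⊆ {c} := fun h => h1 (subset_union_left.trans h)
        by_cases hi : A' ∩ B' ⊆ {c}
        · -- the case where we need t ≤ mutual information
          rw [if_neg hnu, if_pos hi, if_neg h1, if_neg h2]
          obtain ⟨a, haA, hac⟩ := not_subset.mp h1
          obtain ⟨b, hbB, hbc⟩ := not_subset.mp h2
          have hac' : a ≠ c := by simpa using hac
          have hbc' : b ≠ c := by simpa using hbc
          have hab : a ≠ b := by
            rintro rfl
            exact hac' (mem_singleton.mp (hi (mem_inter.mpr ⟨haA, hbB⟩)))
          have hkey := key (A' ∩ B') A' B' (subset_singleton_iff.mp hi)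
            inter_subset_left inter_subset_right hA1 hB1 a haA b hbB hac' hbc' hab
          linarith
        · rw [if_neg hnu, if_neg hi, if_neg h1, if_neg h2]; linarith
    · -- x in A only
      obtain ⟨hA1, hA2⟩ := hsub A hA hxA
      have hBM := hnotx B hB hxB
      set A' := A.erase x
      have eU : A ∪ B = (A' ∪ B) ∪ {x} := by
        rw [hA2]; ext y; simp only [mem_union, mem_inter, mem_insert, mem_singleton]; tauto
      have eI : A ∩ B = A' ∩ B := by
        rw [hA2]; ext y
        simp only [mem_inter, mem_union, mem_singleton]
        constructor
        · rintro ⟨h | rfl, hyB⟩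
          exacts [⟨h, hyB⟩, absurd hyB hxB]
        · rintro ⟨h1, h2⟩; exact ⟨Or.inl h1, h2⟩
      rw [eU, eI, hA2, hfx2' _ hA1, hfx2' _ (union_subset hA1 hBM),
        hfx1 B hBM, hfx1 _ (inter_subset_left.trans hA1)]
      have hfs := hfsub A' B hA1 hBM
      have emono : (if A' ∪ B ⊆ {c} then u + t else u) ≤ (if A' ⊆ {c} then u + t else u) := by
        by_cases h : A' ∪ B ⊆ {c}
        · rw [if_pos h, if_pos (subset_union_left.trans h)]
        · rw [if_neg h]; split_ifs <;> linarith
      linarith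
    · -- x in B only
      obtain ⟨hB1, hB2⟩ := hsub B hB hxB
      have hAM := hnotx A hA hxA
      set B' := B.erase x
      have eU : A ∪ B = (A ∪ B') ∪ {x} := by
        rw [hB2]; ext y; simp only [mem_union, mem_inter, mem_insert, mem_singleton]; tauto
      have eI : A ∩ B = A ∩ B' := by
        rw [hB2]; ext y
        simp only [mem_inter, mem_union, mem_singleton]
        constructor
        · rintro ⟨hyA, h | rfl⟩
          exacts [⟨hyA, h⟩, absurd hyA hxA]
        · rintro ⟨h1, h2⟩; exact ⟨h1, Or.inl h2⟩
      rw [eU, eI, hB2, hfx2' _ hB1, hfx2' _ (union_subset hAM hB1),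
        hfx1 A hAM, hfx1 _ (inter_subset_right.trans hB1)]
      have hfs := hfsub A B' hAM hB1
      have emono : (if A ∪ B' ⊆ {c} then u + t else u) ≤ (if B' ⊆ {c} then u + t else u) := by
        by_cases h : A ∪ B' ⊆ {c}
        · rw [if_pos h, if_pos (subset_union_right.trans h)]
        · rw [if_neg h]; split_ifs <;> linarith
      linarith
    · -- neither contains x
      have hAM := hnotx A hA hxA
      have hBM := hnotx B hB hxB
      rw [hfx1 A hAM, hfx1 B hBM, hfx1 _ (union_subset hAM hBM),
        hfx1 _ (inter_subset_left.trans hAM)]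
      exact hfsub A B hAM hBM
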